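/- Continuity of cluster membership in the merging process: let O_1, O_2, ..., O_r be a sequence of finite antichains of clusters where each O_{j+1} is obtained from O_j by choosing two distinct clusters C_1, C_2 ∈ O_j, setting C_new = LCA(C_1,C_2), and letting O_{j+1} = (O_j \ {C ∈ O_j : C ≤ C_new}) ∪ {C_new}, where C_new ∉ O_j. Then for any cluster c, the set of indices j with c ∈ O_j is an interval: if c ∈ O_a and c ∉ O_i for some a < i, then c ∉ O_j for all j ≥ i. -/
import Mathlib


variable {m : ℕ} {A : Fin m → Type*} [∀ i, DecidableEq (A i)]

/-- Hamming distance between tuples. -/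
def tdist (t t' : ∀ i, A i) : ℕ :=
  (Finset.univ.filter fun i => t i ≠ t' i).card

/-- Distance between clusters (with `none` as the don't-care `*` value). -/
def cdist (C C' : ∀ i, Option (A i)) : ℕ :=
  (Finset.univ.filter fun i => C i = none ∨ C' i = none ∨ C i ≠ C' i).card

/-- `Covers C C'` means cluster `C` covers cluster `C'` (i.e. `C' ≤ C`). -/
def Covers (C C' : ∀ i, Option (A i)) : Prop :=
  ∀ i, C i = none ∨ C i = C' i

/-- `CoversT C t` means cluster `C` covers tuple `t`. -/
def CoversT (C : ∀ i, Option (A i)) (t : ∀ i, A i) : Prop :=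
  ∀ i, C i = none ∨ C i = some (t i)

/-- Level of a cluster: number of `*` entries. -/
def clevel (C : ∀ i, Option (A i)) : ℕ :=
  (Finset.univ.filter fun i => C i = none).card

/-- Least common ancestor (join) of two clusters. -/
def lca (C₁ C₂ : ∀ i, Option (A i)) : ∀ i, Option (A i) :=
  fun i => if C₁ i = C₂ i then C₁ i else none

instance (C C' : ∀ i, Option (A i)) : Decidable (Covers C C') := by
  unfold Covers; infer_instance

instance (C : ∀ i, Option (A i)) (t : ∀ i, A i) : Decidable (CoversT C t) := by
  unfold CoversT; infer_instance


lemma Covers_trans {Z X c : ∀ i, Option (A i)} (h1 : Covers Z X) (h2 : Covers X c) :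
    Covers Z c := by
  intro i
  rcases h1 i with h | h
  · exact Or.inl h
  · rcases h2 i with h' | h'
    · exact Or.inl (h ▸ h')
    · exact Or.inr (h ▸ h')

lemma Covers_antisymm {X c : ∀ i, Option (A i)} (h1 : Covers X c) (h2 : Covers c X) :
    X = c := by
  funext i
  rcases h1 i with h | h
  · rcases h2 i with h' | h'
    · rw [h, h']
    · exact h'.symm
  · exact h

/-- continuity of cluster membership in the merging process:
once a cluster leaves the antichain it never comes back. -/
theorem merging_membership_interval (r : ℕ)
    (O : ℕ → Finset (∀ i, Option (A i)))
    (hanti : ∀ j ≤ r, ∀ X ∈ O j, ∀ Y ∈ O j, X ≠ Y → ¬ Covers X Y)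
    (hstep : ∀ j < r, ∃ C₁ ∈ O j, ∃ C₂ ∈ O j, C₁ ≠ C₂ ∧ lca C₁ C₂ ∉ O j ∧
      O (j + 1) = insert (lca C₁ C₂)
        ((O j).filter fun C => ¬ Covers (lca C₁ C₂) C)) :
    ∀ c : ∀ i, Option (A i), ∀ a i j, a < i → i ≤ j → j ≤ r →
      c ∈ O a → c ∉ O i → c ∉ O j := by
  intro c a i j hai hij hjr hca hci
  -- find the removal step
  have hfind : ∀ i', a < i' → i' ≤ r → c ∉ O i' →
      ∃ k, a ≤ k ∧ k < i' ∧ c ∈ O k ∧ c ∉ O (k + 1) := by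
    intro i' hi'
    have hi1 : a + 1 ≤ i' := hi'
    clear hi'
    induction i', hi1 using Nat.le_induction with
    | base => intro _ h; exact ⟨a, le_refl a, Nat.lt_succ_self a, hca, h⟩
    | succ n hn ih =>
      intro hnr h
      by_cases hcn : c ∈ O n
      · exact ⟨n, Nat.le_of_succ_le hn, Nat.lt_succ_self n, hcn, h⟩
      · obtain ⟨k, hk1, hk2, hk3, hk4⟩ := ih (le_trans (Nat.le_succ n) hnr) hcn
        exact ⟨k, hk1, Nat.lt_succ_of_lt hk2, hk3, hk4⟩
  obtain ⟨k, hak, hki, hck, hck1⟩ := hfind i hai (le_trans hij hjr) hci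
  -- at step k, a strict ancestor of c appears
  have hkr : k < r := lt_of_lt_of_le hki (le_trans hij hjr)
  -- invariant: for all n with k < n ≤ r there is a strict ancestor of c in O n
  have hinv : ∀ n, k + 1 ≤ n → n ≤ r → ∃ X ∈ O n, X ≠ c ∧ Covers X c := by
    intro n hn1
    induction n, hn1 using Nat.le_induction with
    | base =>
      intro _
      obtain ⟨C₁, _, C₂, _, _, hnot, heq⟩ := hstep k hkr
      have hcov : Covers (lca C₁ C₂) c := by
        by_contra hc
        apply hck1
        rw [heq]
        exact Finset.mem_insert_of_mem (Finset.mem_filter.mpr ⟨hck, hc⟩)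
      have hne : lca C₁ C₂ ≠ c := fun h => hnot (h ▸ hck)
      exact ⟨lca C₁ C₂, heq ▸ Finset.mem_insert_self _ _, hne, hcov⟩
    | succ n hn ih =>
      intro hnr
      have hnr' : n < r := hnr
      obtain ⟨X, hX, hXne, hXc⟩ := ih (le_trans (Nat.le_succ n) hnr)
      obtain ⟨C₁, _, C₂, _, _, hnot, heq⟩ := hstep n hnr'
      by_cases hs : Covers (lca C₁ C₂) X
      · refine ⟨lca C₁ C₂, heq ▸ Finset.mem_insert_self _ _, ?_, Covers_trans hs hXc⟩
        intro h
        exact hXne (Covers_antisymm hXc (h ▸ hs))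
      · exact ⟨X, heq ▸ Finset.mem_insert_of_mem (Finset.mem_filter.mpr ⟨hX, hs⟩),
          hXne, hXc⟩
  obtain ⟨X, hX, hXne, hXc⟩ := hinv j (le_trans hki hij) hjr
  intro hcj
  exact hanti j hjr X hX c hcj hXne hXc
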